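/- Let q : ℝ² → M_{k×(n−k)}(ℂ) be smooth, and let u = [[0, q],[−q*, 0]] and Q₂ = [[−i q q*, i q_x],[i q_x*, i q* q]] be the associated block matrices in u(n). Then the equation u_t = (Q₂)_x + [u, Q₂] holds identically if and only if q satisfies the matrix nonlinear Schrödinger equation q_t = i(q_xx + 2 q q* q). -/

import Mathlib

open Matrix

attribute [local instance] Matrix.normedAddCommGroup Matrix.normedSpace

private lemma entry_hasDerivAt {I J : Type*} [Fintype I] [Fintype J] {F : ℝ → Matrix I J ℂ} {x : ℝ}
    (h : DifferentiableAt ℝ F x) (i : I) (j : J) :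
    HasDerivAt (fun y => F y i j) (deriv F x i j) x :=
  hasDerivAt_pi.1 (hasDerivAt_pi.1 h.hasDerivAt i) j

private lemma matrix_hasDerivAt {I J : Type*} [Fintype I] [Fintype J] {F : ℝ → Matrix I J ℂ}
    {M : Matrix I J ℂ} {x : ℝ}
    (h : ∀ i j, HasDerivAt (fun y => F y i j) (M i j) x) :
    HasDerivAt F M x :=
  hasDerivAt_pi.2 fun i => hasDerivAt_pi.2 fun j => h i j

/-- For smooth `q : ℝ² → M_{k×(n−k)}(ℂ)` with associated block matrices
`u = [[0,q],[−q*,0]]` and `Q₂ = [[−iqq*, iq_x],[iq_x*, iq*q]]`, the equation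
`u_t = (Q₂)_x + [u, Q₂]` holds identically iff `q` satisfies the matrix nonlinear
Schrödinger equation `q_t = i(q_xx + 2qq*q)`. -/
theorem stmt3 (k m : ℕ) (hk : 0 < k) (hm : 0 < m)
    (q : ℝ → ℝ → Matrix (Fin k) (Fin m) ℂ)
    (hq : ContDiff ℝ (⊤ : ℕ∞) fun p : ℝ × ℝ => q p.1 p.2)
    -- partial derivatives of q
    (qx qxx qt : ℝ → ℝ → Matrix (Fin k) (Fin m) ℂ)
    (hqx : ∀ x t, qx x t = deriv (fun y => q y t) x)
    (hqxx : ∀ x t, qxx x t = deriv (fun y => qx y t) x)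
    (hqt : ∀ x t, qt x t = deriv (fun s => q x s) t)
    -- the associated block matrices u and Q₂
    (u Q₂ : ℝ → ℝ → Matrix (Fin k ⊕ Fin m) (Fin k ⊕ Fin m) ℂ)
    (hu : ∀ x t, u x t = Matrix.fromBlocks 0 (q x t) (-(q x t)ᴴ) 0)
    (hQ₂ : ∀ x t, Q₂ x t = Matrix.fromBlocks
        ((-Complex.I) • (q x t * (q x t)ᴴ)) (Complex.I • qx x t)
        (Complex.I • (qx x t)ᴴ) (Complex.I • ((q x t)ᴴ * q x t))) :
    -- u_t = (Q₂)_x + [u, Q₂]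
    (∀ x t, deriv (fun s => u x s) t
        = deriv (fun y => Q₂ y t) x + (u x t * Q₂ x t - Q₂ x t * u x t))
    ↔
    -- the matrix nonlinear Schrödinger equation q_t = i(q_xx + 2qq*q)
    (∀ x t, qt x t = Complex.I • (qxx x t + (2 : ℂ) • (q x t * (q x t)ᴴ * q x t))) := by
  -- joint smoothness of qx
  have hqxs : ContDiff ℝ (⊤ : ℕ∞) fun p : ℝ × ℝ => qx p.1 p.2 := by
    have h1 : (fun p : ℝ × ℝ => qx p.1 p.2)
        = fun p : ℝ × ℝ => fderiv ℝ (fun y => q y p.2) p.1 1 := by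
      funext p
      rw [hqx]; exact fderiv_apply_one_eq_deriv.symm
    have hunc : ContDiff ℝ (⊤ : ℕ∞) (Function.uncurry fun (p : ℝ × ℝ) (y : ℝ) => q y p.2) :=
      hq.comp (contDiff_snd.prodMk (contDiff_snd.comp contDiff_fst))
    rw [h1]
    exact ContDiff.fderiv_apply
      (f := fun (p : ℝ × ℝ) (y : ℝ) => q y p.2) (g := fun p => p.1) (k := fun _ => 1)
      hunc contDiff_fst contDiff_const (by simp)
  -- differentiability in each variable
  have hdx : ∀ (t x : ℝ), DifferentiableAt ℝ (fun y => q y t) x := fun t x =>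
    ((hq.comp ((contDiff_id).prodMk contDiff_const)).differentiable (by simp)).differentiableAt
  have hdxx : ∀ (t x : ℝ), DifferentiableAt ℝ (fun y => qx y t) x := fun t x =>
    ((hqxs.comp ((contDiff_id).prodMk contDiff_const)).differentiable (by simp)).differentiableAt
  have hdt : ∀ (x t : ℝ), DifferentiableAt ℝ (fun s => q x s) t := fun x t =>
    ((hq.comp ((contDiff_const).prodMk contDiff_id)).differentiable (by simp)).differentiableAt
  -- entrywise derivative facts
  have Dq : ∀ (x t : ℝ) i j, HasDerivAt (fun y => q y t i j) (qx x t i j) x := by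
    intro x t i j
    rw [hqx]
    exact entry_hasDerivAt (hdx t x) i j
  have Dqx : ∀ (x t : ℝ) i j, HasDerivAt (fun y => qx y t i j) (qxx x t i j) x := by
    intro x t i j
    rw [hqxx]
    exact entry_hasDerivAt (hdxx t x) i j
  have Dqt : ∀ (x t : ℝ) i j, HasDerivAt (fun s => q x s i j) (qt x t i j) t := by
    intro x t i j
    rw [hqt]
    exact entry_hasDerivAt (hdt x t) i j
  -- derivative of u in t
  have HU : ∀ x t, HasDerivAt (fun s => u x s)
      (Matrix.fromBlocks 0 (qt x t) (-(qt x t)ᴴ) 0) t := by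
    intro x t
    apply matrix_hasDerivAt
    intro a b
    rcases a with i | i <;> rcases b with j | j <;>
      simp only [hu, Matrix.fromBlocks_apply₁₁, Matrix.fromBlocks_apply₁₂,
        Matrix.fromBlocks_apply₂₁, Matrix.fromBlocks_apply₂₂, Matrix.zero_apply,
        Matrix.neg_apply, Matrix.conjTranspose_apply]
    · exact hasDerivAt_const _ _
    · exact Dqt x t i j
    · exact ((Dqt x t j i).star).neg
    · exact hasDerivAt_const _ _
  -- derivative of Q₂ in x
  have HQ : ∀ x t, HasDerivAt (fun y => Q₂ y t)
      (Matrix.fromBlocks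
        ((-Complex.I) • (qx x t * (q x t)ᴴ + q x t * (qx x t)ᴴ))
        (Complex.I • qxx x t)
        (Complex.I • (qxx x t)ᴴ)
        (Complex.I • ((qx x t)ᴴ * q x t + (q x t)ᴴ * qx x t))) x := by
    intro x t
    apply matrix_hasDerivAt
    intro a b
    rcases a with i | i <;> rcases b with j | j <;>
      simp only [hQ₂, Matrix.fromBlocks_apply₁₁, Matrix.fromBlocks_apply₁₂,
        Matrix.fromBlocks_apply₂₁, Matrix.fromBlocks_apply₂₂, Matrix.smul_apply,
        Matrix.mul_apply, Matrix.add_apply, Matrix.conjTranspose_apply, smul_eq_mul]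
    · have h : HasDerivAt (fun y => ∑ l, q y t i l * star (q y t j l))
          (∑ l, (qx x t i l * star (q x t j l) + q x t i l * star (qx x t j l))) x :=
        HasDerivAt.fun_sum fun l _ => (Dq x t i l).mul ((Dq x t j l).star)
      convert h.const_mul (-Complex.I) using 1
      case e'_4 => rfl
      rw [Finset.sum_add_distrib]
    · exact (Dqx x t i j).const_mul Complex.I
    · exact ((Dqx x t j i).star).const_mul Complex.I
    · have h : HasDerivAt (fun y => ∑ l, star (q y t l i) * q y t l j)
          (∑ l, (star (qx x t l i) * q x t l j + star (q x t l i) * qx x t l j)) x :=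
        HasDerivAt.fun_sum fun l _ => ((Dq x t l i).star).mul (Dq x t l j)
      convert h.const_mul Complex.I using 1
      case e'_4 => rfl
      rw [Finset.sum_add_distrib]
  constructor
  · intro H x t
    have E := H x t
    rw [show deriv (fun s => u x s) t = _ from (HU x t).deriv,
      show deriv (fun y => Q₂ y t) x = _ from (HQ x t).deriv, hu, hQ₂] at E
    rw [sub_eq_add_neg] at E
    simp only [Matrix.fromBlocks_multiply, Matrix.fromBlocks_neg, Matrix.fromBlocks_add,
      Matrix.zero_mul, Matrix.mul_zero, add_zero, zero_add, Matrix.fromBlocks_inj] at E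
    obtain ⟨-, hB, -, -⟩ := E
    rw [hB]
    ext i j
    simp only [Matrix.mul_smul, Matrix.smul_mul, Matrix.neg_mul, Matrix.mul_neg, neg_smul,
      smul_neg, neg_neg, Matrix.mul_assoc, Matrix.add_apply, Matrix.smul_apply, smul_eq_mul]
    ring
  · intro H x t
    rw [show deriv (fun s => u x s) t = _ from (HU x t).deriv,
      show deriv (fun y => Q₂ y t) x = _ from (HQ x t).deriv, hu, hQ₂, sub_eq_add_neg]
    simp only [Matrix.fromBlocks_multiply, Matrix.fromBlocks_neg, Matrix.fromBlocks_add,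
      Matrix.zero_mul, Matrix.mul_zero, add_zero, zero_add, Matrix.fromBlocks_inj]
    refine ⟨?_, ?_, ?_, ?_⟩
    · ext i j
      simp only [Matrix.mul_smul, Matrix.smul_mul, Matrix.neg_mul, Matrix.mul_neg, neg_smul,
        smul_neg, neg_neg, Matrix.mul_assoc, Matrix.add_apply, Matrix.smul_apply,
        Matrix.neg_apply, Matrix.zero_apply, smul_eq_mul]
      ring
    · rw [H x t]
      ext i j
      simp only [Matrix.mul_smul, Matrix.smul_mul, Matrix.neg_mul, Matrix.mul_neg, neg_smul,
        smul_neg, neg_neg, Matrix.mul_assoc, Matrix.add_apply, Matrix.smul_apply, smul_eq_mul]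
      ring
    · rw [H x t]
      ext i j
      simp only [Matrix.conjTranspose_smul, Matrix.conjTranspose_add, Matrix.conjTranspose_mul,
        Matrix.conjTranspose_conjTranspose, Complex.star_def, Complex.conj_I, star_ofNat,
        Matrix.mul_smul, Matrix.smul_mul, Matrix.neg_mul, Matrix.mul_neg, neg_smul,
        smul_neg, neg_neg, Matrix.mul_assoc, Matrix.add_apply, Matrix.smul_apply,
        Matrix.neg_apply, smul_eq_mul]
      ring
    · ext i j
      simp only [Matrix.mul_smul, Matrix.smul_mul, Matrix.neg_mul, Matrix.mul_neg, neg_smul,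
        smul_neg, neg_neg, Matrix.mul_assoc, Matrix.add_apply, Matrix.smul_apply,
        Matrix.neg_apply, Matrix.zero_apply, smul_eq_mul]
      ring
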